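/- The Schur complement of the even-indexed blocks in a red/black permuted block tridiagonal matrix is again block tridiagonal. Precisely: let A be a block tridiagonal matrix with n = 2m blocks, with diagonal blocks D_0,...,D_{n-1}, subdiagonal blocks E_1,...,E_{n-1}, and superdiagonal blocks F_0,...,F_{n-2}, where each D_j with j even is invertible. After permuting rows and columns so the even-indexed block rows come first (giving the 2x2 block form [[A11,A12],[A21,A22]] with A11 block diagonal containing the even D_j), the Schur complement A22 - A21 A11^{-1} A12 is block tridiagonal in the odd-indexed blocks, with diagonal blocks D_j - E_j D_{j-1}^{-1} F_{j-1} - F_j D_{j+1}^{-1} E_{j+1}, subdiagonal blocks -E_j D_{j-1}^{-1} E_{j-1}, and superdiagonal blocks -F_j D_{j+1}^{-1} F_{j+1} (for odd j, with the boundary convention that terms involving indices outside 0..n-1 are omitted). -/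

import Mathlib

open Matrix

/-- The Schur complement of the even-indexed blocks in a red/black permuted
block tridiagonal matrix is again block tridiagonal, with the cyclic-reduction
block formulas.  Blocks are indexed by naturals; blocks with indices outside
`0..2m-1` are zero, which encodes the boundary convention. -/
theorem schur_complement_of_even_blocks_is_block_tridiagonal
    (m s : ℕ) (D E F : ℕ → Matrix (Fin s) (Fin s) ℝ)
    (hE0 : E 0 = 0) (hEtop : ∀ j, 2 * m ≤ j → E j = 0)
    (hFtop : ∀ j, 2 * m - 1 ≤ j → F j = 0)
    (hD : ∀ i : Fin m, IsUnit (D (2 * (i : ℕ))))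
    (A11 A12 A21 A22 : Matrix (Fin m × Fin s) (Fin m × Fin s) ℝ)
    (hA11 : A11 = fun p q => if p.1 = q.1 then D (2 * (p.1 : ℕ)) p.2 q.2 else 0)
    (hA12 : A12 = fun p q =>
      if p.1 = q.1 then F (2 * (p.1 : ℕ)) p.2 q.2
      else if (p.1 : ℕ) = (q.1 : ℕ) + 1 then E (2 * (p.1 : ℕ)) p.2 q.2 else 0)
    (hA21 : A21 = fun p q =>
      if p.1 = q.1 then E (2 * (p.1 : ℕ) + 1) p.2 q.2
      else if (q.1 : ℕ) = (p.1 : ℕ) + 1 then F (2 * (p.1 : ℕ) + 1) p.2 q.2 else 0)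
    (hA22 : A22 = fun p q => if p.1 = q.1 then D (2 * (p.1 : ℕ) + 1) p.2 q.2 else 0) :
    A22 - A21 * A11⁻¹ * A12 = fun p q =>
      if p.1 = q.1 then
        (D (2 * (p.1 : ℕ) + 1)
          - E (2 * (p.1 : ℕ) + 1) * (D (2 * (p.1 : ℕ)))⁻¹ * F (2 * (p.1 : ℕ))
          - F (2 * (p.1 : ℕ) + 1) * (D (2 * (p.1 : ℕ) + 2))⁻¹ * E (2 * (p.1 : ℕ) + 2)) p.2 q.2
      else if (p.1 : ℕ) = (q.1 : ℕ) + 1 then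
        (-(E (2 * (p.1 : ℕ) + 1) * (D (2 * (p.1 : ℕ)))⁻¹ * E (2 * (p.1 : ℕ)))) p.2 q.2
      else if (q.1 : ℕ) = (p.1 : ℕ) + 1 then
        (-(F (2 * (p.1 : ℕ) + 1) * (D (2 * (p.1 : ℕ) + 2))⁻¹ * F (2 * (p.1 : ℕ) + 2))) p.2 q.2
      else 0 := by
  -- Closed form for the inverse of the block diagonal matrix `A11`.
  have hBinv : A11⁻¹ =
      fun p q => if p.1 = q.1 then (D (2 * (p.1 : ℕ)))⁻¹ p.2 q.2 else 0 := by
    apply inv_eq_right_inv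
    ext ⟨j, a⟩ ⟨l, b⟩
    erw [Matrix.mul_apply]
    simp only [hA11, Matrix.mul_apply, Fintype.sum_prod_type, ite_mul, mul_ite, zero_mul,
      mul_zero]
    rw [Finset.sum_comm]
    simp only [Finset.sum_ite_eq', Finset.mem_univ, if_true]
    rcases eq_or_ne j l with rfl | hjl
    · have h1 : D (2 * (j : ℕ)) * (D (2 * (j : ℕ)))⁻¹ = 1 :=
        Matrix.mul_nonsing_inv _ ((Matrix.isUnit_iff_isUnit_det _).mp (hD j))
      simp only [eq_self_iff_true, if_true]
      rw [show (∑ t, D (2 * (j:ℕ)) a t * (D (2 * (j:ℕ)))⁻¹ t b)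
          = (D (2 * (j:ℕ)) * (D (2 * (j:ℕ)))⁻¹) a b from (Matrix.mul_apply).symm, h1]
      simp [Matrix.one_apply, Prod.ext_iff]
    · simp [Ne.symm hjl, Matrix.one_apply, Prod.ext_iff, hjl]
  -- Closed form for `A21 * A11⁻¹`.
  have hM1 : A21 * A11⁻¹ = fun p q =>
      if p.1 = q.1 then (E (2 * (p.1 : ℕ) + 1) * (D (2 * (p.1 : ℕ)))⁻¹) p.2 q.2
      else if (q.1 : ℕ) = (p.1 : ℕ) + 1 then
        (F (2 * (p.1 : ℕ) + 1) * (D (2 * (q.1 : ℕ)))⁻¹) p.2 q.2 else 0 := by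
    rw [hA21, hBinv]
    ext ⟨j, a⟩ ⟨l, b⟩
    erw [Matrix.mul_apply]
    simp only [Matrix.mul_apply, Fintype.sum_prod_type, mul_ite, mul_zero]
    rw [Finset.sum_comm]
    simp only [Finset.sum_ite_eq', Finset.mem_univ, if_true]
    rcases eq_or_ne j l with rfl | hjl
    · simp [Matrix.mul_apply]
    · rcases em ((l : ℕ) = (j : ℕ) + 1) with h | h
      · simp [hjl, h, Matrix.mul_apply]
      · simp [hjl, h]
  -- Closed form for `(A21 * A11⁻¹) * A12`.
  have hM2 : A21 * A11⁻¹ * A12 = fun p q =>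
      if p.1 = q.1 then
        (E (2 * (p.1 : ℕ) + 1) * (D (2 * (p.1 : ℕ)))⁻¹ * F (2 * (p.1 : ℕ))
          + F (2 * (p.1 : ℕ) + 1) * (D (2 * (p.1 : ℕ) + 2))⁻¹ * E (2 * (p.1 : ℕ) + 2)) p.2 q.2
      else if (p.1 : ℕ) = (q.1 : ℕ) + 1 then
        (E (2 * (p.1 : ℕ) + 1) * (D (2 * (p.1 : ℕ)))⁻¹ * E (2 * (p.1 : ℕ))) p.2 q.2
      else if (q.1 : ℕ) = (p.1 : ℕ) + 1 then
        (F (2 * (p.1 : ℕ) + 1) * (D (2 * (p.1 : ℕ) + 2))⁻¹ * F (2 * (p.1 : ℕ) + 2)) p.2 q.2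
      else 0 := by
    have key : ∀ (f : Fin m → ℝ) (j : Fin m),
        (∑ k : Fin m, if (k : ℕ) = (j : ℕ) + 1 then f k else 0)
        = if h : (j : ℕ) + 1 < m then f ⟨(j : ℕ) + 1, h⟩ else 0 := by
      intro f j
      by_cases h : (j : ℕ) + 1 < m
      · rw [dif_pos h, Finset.sum_eq_single (⟨(j : ℕ) + 1, h⟩ : Fin m)]
        · simp
        · intro k _ hk
          rw [if_neg]
          exact fun hc => hk (Fin.ext hc)
        · simp
      · rw [dif_neg h]
        apply Finset.sum_eq_zero
        intro k _
        rw [if_neg]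
        exact fun hc => h (hc ▸ k.isLt)
    have key2 : ∀ (P Q : Fin m → ℝ) (l : Fin m),
        (∑ k : Fin m, if k = l then P k else if (k : ℕ) = (l : ℕ) + 1 then Q k else 0)
        = P l + (if h : (l : ℕ) + 1 < m then Q ⟨(l : ℕ) + 1, h⟩ else 0) := by
      intro P Q l
      have hsplit : ∀ k : Fin m,
          (if k = l then P k else if (k : ℕ) = (l : ℕ) + 1 then Q k else 0)
          = (if k = l then P k else 0) + (if (k : ℕ) = (l : ℕ) + 1 then Q k else 0) := by
        intro k
        rcases eq_or_ne k l with rfl | hk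
        · simp
        · simp [hk]
      simp only [hsplit, Finset.sum_add_distrib, Finset.sum_ite_eq', Finset.mem_univ, if_true,
        key Q l]
    rw [hM1, hA12]
    ext ⟨j, a⟩ ⟨l, b⟩
    erw [Matrix.mul_apply]
    simp only [Matrix.mul_apply, Fintype.sum_prod_type, ite_mul, zero_mul, mul_ite, mul_zero,
      Finset.sum_ite_irrel, Finset.sum_const_zero]
    rw [key2]
    rcases eq_or_ne j l with rfl | hjl
    · have hc1 : ¬((j : ℕ) = (j : ℕ) + 1) := by omega
      simp only [if_pos rfl, eq_self_iff_true, if_true]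
      by_cases h : (j : ℕ) + 1 < m
      · have h1 : j ≠ (⟨(j : ℕ) + 1, h⟩ : Fin m) := by
          intro hc; exact hc1 (congrArg Fin.val hc)
        have h2 : 2 * ((j : ℕ) + 1) = 2 * (j : ℕ) + 2 := by ring
        simp only [dif_pos h, if_neg h1, if_pos rfl, h2]
        simp [Matrix.mul_apply, Matrix.add_apply]
      · have hE : E (2 * (j : ℕ) + 2) = 0 := hEtop _ (by omega)
        simp only [dif_neg h]
        simp [Matrix.mul_apply, Matrix.add_apply, hE]
    · simp only [if_neg hjl, if_neg (fun hc : j = l => hjl hc)]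
      by_cases hjl1 : (j : ℕ) = (l : ℕ) + 1
      · have hl1 : (l : ℕ) + 1 < m := hjl1 ▸ j.isLt
        have hjeq : j = (⟨(l : ℕ) + 1, hl1⟩ : Fin m) := Fin.ext hjl1
        have hnl : ¬((l : ℕ) = (j : ℕ) + 1) := by omega
        have h2 : 2 * ((l : ℕ) + 1) = 2 * (j : ℕ) := by omega
        simp only [if_pos hjl1, if_neg hnl, dif_pos hl1, if_pos hjeq.symm, h2]
        simp [← hjl1]
      · have hne2 : ¬((j:ℕ) = (l:ℕ)) := fun hc => hjl (Fin.ext hc)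
        simp only [if_neg hjl1]
        by_cases hlj1 : (l : ℕ) = (j : ℕ) + 1
        · have h2 : 2 * (l : ℕ) = 2 * (j : ℕ) + 2 := by omega
          simp only [if_pos hlj1, h2]
          by_cases h : (l : ℕ) + 1 < m
          · have ha : ¬(j = (⟨(l : ℕ) + 1, h⟩ : Fin m)) := by
              intro hc; exact hjl1 (congrArg Fin.val hc)
            have hb : ¬(((⟨(l : ℕ) + 1, h⟩ : Fin m) : ℕ) = (j : ℕ) + 1) := by
              simp only [Fin.val_mk]; omega
            have hb' : ¬(((⟨(l : ℕ) + 1, h⟩ : Fin m) : ℕ) = (j : ℕ) + 1) := hb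
            simp only [dif_pos h, if_neg ha, Fin.val_mk] at *
            rw [if_neg hb']
            simp
          · simp [dif_neg h]
        · simp only [if_neg hlj1]
          by_cases h : (l : ℕ) + 1 < m
          · have ha : ¬(j = (⟨(l : ℕ) + 1, h⟩ : Fin m)) := by
              intro hc; exact hjl1 (congrArg Fin.val hc)
            have hb : ¬(((⟨(l : ℕ) + 1, h⟩ : Fin m) : ℕ) = (j : ℕ) + 1) := by
              simp only [Fin.val_mk]; omega
            have hb' : ¬(((⟨(l : ℕ) + 1, h⟩ : Fin m) : ℕ) = (j : ℕ) + 1) := hb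
            simp only [dif_pos h, if_neg ha, Fin.val_mk] at *
            rw [if_neg hb']
            simp
          · simp [dif_neg h]
  -- Assemble.
  rw [hA22, hM2]
  ext ⟨j, a⟩ ⟨l, b⟩
  erw [Matrix.sub_apply]
  simp only [Matrix.sub_apply]
  split_ifs <;>
    simp [Matrix.sub_apply, Matrix.add_apply, Matrix.neg_apply] <;> ring
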